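/- The maximum number of triangles in a 7-vertex graph containing no copy of the suspension of P4 is exactly 8; that is, ex(7, K₃, P̂₄) = 8. -/

import Mathlib

/-- `H` is contained in `G` as a (not necessarily induced) subgraph:
there is an injective map of vertices carrying edges of `H` to edges of `G`. -/
def Contains {α β : Type*} (H : SimpleGraph α) (G : SimpleGraph β) : Prop :=
  ∃ f : α → β, Function.Injective f ∧ ∀ ⦃a b⦄, H.Adj a b → G.Adj (f a) (f b)

/-- The suspension `P̂₄` of the path on 4 vertices: a new apex vertex `none`
is joined to all four vertices of `P₄`. -/
def hatP4 : SimpleGraph (Option (Fin 4)) :=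
  SimpleGraph.fromRel (fun a b =>
    (∃ i j, a = some i ∧ b = some j ∧ (SimpleGraph.pathGraph 4).Adj i j) ∨ a = none)

/-- The number of triangles (3-cliques) of a graph. -/
noncomputable def triangleCount {V : Type*} (G : SimpleGraph V) : ℕ :=
  (G.cliqueSet 3).ncard

instance : DecidableRel (SimpleGraph.pathGraph 4).Adj :=
  fun _ _ => decidable_of_iff _ (SimpleGraph.pathGraph_adj).symm

instance : DecidableRel hatP4.Adj :=
  fun _ _ => decidable_of_iff _ (SimpleGraph.fromRel_adj _ _ _).symm

def Cfg {V : Type*} (G : SimpleGraph V) : Prop :=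
  ∃ v a b c d : V, G.Adj v a ∧ G.Adj v b ∧ G.Adj v c ∧ G.Adj v d ∧
    G.Adj a b ∧ G.Adj b c ∧ G.Adj c d ∧ a ≠ b ∧ a ≠ c ∧ a ≠ d ∧ b ≠ c ∧ b ≠ d ∧ c ≠ d

example : hatP4.Adj none (some 0) := by decide
example : hatP4.Adj (some 0) (some 1) := by decide

theorem contains_iff_cfg {V : Type*} (G : SimpleGraph V) : Contains hatP4 G ↔ Cfg G := by
  constructor
  · rintro ⟨f, hinj, hmap⟩
    refine ⟨f none, f (some 0), f (some 1), f (some 2), f (some 3),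
      hmap (by decide), hmap (by decide), hmap (by decide), hmap (by decide),
      hmap (by decide), hmap (by decide), hmap (by decide),
      hinj.ne (by decide), hinj.ne (by decide), hinj.ne (by decide),
      hinj.ne (by decide), hinj.ne (by decide), hinj.ne (by decide)⟩
  · rintro ⟨v, a, b, c, d, hva, hvb, hvc, hvd, hab, hbc, hcd,
      nab, nac, nad, nbc, nbd, ncd⟩
    have nva : v ≠ a := G.ne_of_adj hva
    have nvb : v ≠ b := G.ne_of_adj hvb
    have nvc : v ≠ c := G.ne_of_adj hvc
    have nvd : v ≠ d := G.ne_of_adj hvd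
    refine ⟨fun o => match o with
      | none => v
      | some i => ![a, b, c, d] i, ?_, ?_⟩
    · intro x y hxy
      match x, y with
      | none, none => rfl
      | none, some j =>
        exfalso
        fin_cases j
        · exact nva hxy
        · exact nvb hxy
        · exact nvc hxy
        · exact nvd hxy
      | some i, none =>
        exfalso
        fin_cases i
        · exact nva hxy.symm
        · exact nvb hxy.symm
        · exact nvc hxy.symm
        · exact nvd hxy.symm
      | some i, some j =>
        congr 1
        fin_cases i <;> fin_cases j <;>
          first
          | rfl
          | exact absurd hxy nab | exact absurd hxy nac | exact absurd hxy nad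
          | exact absurd hxy nbc | exact absurd hxy nbd | exact absurd hxy ncd
          | exact absurd hxy.symm nab | exact absurd hxy.symm nac | exact absurd hxy.symm nad
          | exact absurd hxy.symm nbc | exact absurd hxy.symm nbd | exact absurd hxy.symm ncd
    · intro x y hxy
      match x, y with
      | none, none => exact absurd hxy (by decide)
      | none, some j =>
        fin_cases j
        · exact hva
        · exact hvb
        · exact hvc
        · exact hvd
      | some i, none =>
        fin_cases i
        · exact hva.symm
        · exact hvb.symm
        · exact hvc.symm
        · exact hvd.symm
      | some i, some j =>
        fin_cases i <;> fin_cases j <;>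
          first
          | exact absurd hxy (by decide)
          | exact hab | exact hbc | exact hcd
          | exact hab.symm | exact hbc.symm | exact hcd.symm

section Pf
variable (G : SimpleGraph (Fin 7)) [DecidableRel G.Adj]

def pf (W : Finset (Fin 7)) : Finset (Fin 7 × Fin 7) :=
  (W ×ˢ W).filter fun p => p.1 < p.2 ∧ G.Adj p.1 p.2

def degW (W : Finset (Fin 7)) (u : Fin 7) : ℕ := (W ∩ G.neighborFinset u).card

def NoP4 (W : Finset (Fin 7)) : Prop :=
  ∀ a b c d, a ∈ W → b ∈ W → c ∈ W → d ∈ W →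
    a ≠ b → a ≠ c → a ≠ d → b ≠ c → b ≠ d → c ≠ d →
    G.Adj a b → G.Adj b c → G.Adj c d → False

variable {G}

lemma mem_pf {W : Finset (Fin 7)} {p : Fin 7 × Fin 7} :
    p ∈ pf G W ↔ p.1 ∈ W ∧ p.2 ∈ W ∧ p.1 < p.2 ∧ G.Adj p.1 p.2 := by
  simp [pf, Finset.mem_filter, Finset.mem_product, and_assoc]

lemma pf_card_le_choose (W : Finset (Fin 7)) : (pf G W).card ≤ W.card.choose 2 := by
  rw [← Finset.card_powersetCard]
  apply Finset.card_le_card_of_injOn (fun p => {p.1, p.2})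
  · intro p hp
    obtain ⟨h1, h2, hlt, _⟩ := mem_pf.mp hp
    rw [Finset.mem_coe, Finset.mem_powersetCard]
    constructor
    · intro x hx
      rcases Finset.mem_insert.mp hx with rfl | hx
      · exact h1
      · rw [Finset.mem_singleton.mp hx]; exact h2
    · rw [Finset.card_insert_of_notMem (by simpa using (ne_of_lt hlt)),
        Finset.card_singleton]
  · intro p hp q hq heq
    obtain ⟨_, _, hpl, _⟩ := mem_pf.mp hp
    obtain ⟨_, _, hql, _⟩ := mem_pf.mp hq
    simp only [Finset.coe_mem] at heq
    have hp1 : p.1 ∈ ({q.1, q.2} : Finset (Fin 7)) := by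
      rw [← heq]; simp
    have hp2 : p.2 ∈ ({q.1, q.2} : Finset (Fin 7)) := by
      rw [← heq]; simp
    have hq1 : q.1 ∈ ({p.1, p.2} : Finset (Fin 7)) := by
      rw [heq]; simp
    simp only [Finset.mem_insert, Finset.mem_singleton] at hp1 hp2 hq1
    have e1 : p.1 = q.1 := by
      rcases hp1 with h | h
      · exact h
      · exfalso
        rcases hq1 with h' | h'
        · omega
        · omega
    have e2 : p.2 = q.2 := by
      rcases hp2 with h | h
      · omega
      · exact h
    exact Prod.ext e1 e2

lemma choose_two_le_one {m : ℕ} (h : m ≤ 2) : m.choose 2 ≤ 1 := by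
  interval_cases m <;> simp

lemma pf_handshake (W : Finset (Fin 7)) :
    ∑ u ∈ W, degW G W u = 2 * (pf G W).card := by
  classical
  set A := (W ×ˢ W).filter (fun p => G.Adj p.1 p.2) with hA
  have memA : ∀ p : Fin 7 × Fin 7, p ∈ A ↔ p.1 ∈ W ∧ p.2 ∈ W ∧ G.Adj p.1 p.2 := by
    intro p; simp [hA, Finset.mem_filter, Finset.mem_product, and_assoc]
  have h1 : A.card = ∑ u ∈ W, degW G W u := by
    rw [Finset.card_eq_sum_card_fiberwise (f := Prod.fst) (t := W)
      (fun p hp => ((memA p).mp hp).1)]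
    refine Finset.sum_congr rfl (fun u hu => ?_)
    apply Finset.card_bij (fun p _ => p.2)
    · intro p hp
      rw [Finset.mem_filter] at hp
      obtain ⟨hpA, hpu⟩ := hp
      obtain ⟨_, h2, hadj⟩ := (memA p).mp hpA
      exact Finset.mem_inter.mpr ⟨h2, (SimpleGraph.mem_neighborFinset _ _ _).mpr (hpu ▸ hadj)⟩
    · intro p hp q hq heq
      rw [Finset.mem_filter] at hp hq
      exact Prod.ext (hp.2.trans hq.2.symm) heq
    · intro x hx
      obtain ⟨hxW, hxN⟩ := Finset.mem_inter.mp hx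
      refine ⟨(u, x), Finset.mem_filter.mpr ⟨(memA _).mpr ⟨hu, hxW, ?_⟩, rfl⟩, rfl⟩
      exact (SimpleGraph.mem_neighborFinset _ _ _).mp hxN
  have h2 : A = pf G W ∪ (pf G W).image Prod.swap := by
    ext p
    rw [Finset.mem_union, memA, Finset.mem_image]
    constructor
    · rintro ⟨h1', h2', hadj⟩
      rcases lt_or_gt_of_ne (G.ne_of_adj hadj) with hlt | hgt
      · exact Or.inl (mem_pf.mpr ⟨h1', h2', hlt, hadj⟩)
      · exact Or.inr ⟨(p.2, p.1), mem_pf.mpr ⟨h2', h1', hgt, hadj.symm⟩, rfl⟩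
    · rintro (hp | ⟨q, hq, rfl⟩)
      · obtain ⟨a, b, c, d⟩ := mem_pf.mp hp
        exact ⟨a, b, d⟩
      · obtain ⟨a, b, c, d⟩ := mem_pf.mp hq
        exact ⟨b, a, d.symm⟩
  have h3 : Disjoint (pf G W) ((pf G W).image Prod.swap) := by
    rw [Finset.disjoint_left]
    intro p hp hp'
    obtain ⟨_, _, hlt, _⟩ := mem_pf.mp hp
    obtain ⟨q, hq, rfl⟩ := Finset.mem_image.mp hp'
    obtain ⟨_, _, hlt', _⟩ := mem_pf.mp hq
    exact absurd hlt (by simp [Prod.swap]; omega)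
  have h4 : ((pf G W).image Prod.swap).card = (pf G W).card :=
    Finset.card_image_of_injective _ Prod.swap_injective
  rw [← h1, h2, Finset.card_union_of_disjoint h3, h4]
  omega

end Pf

section Pf2
variable {G : SimpleGraph (Fin 7)} [DecidableRel G.Adj]

lemma mem_nbr {u x : Fin 7} : x ∈ G.neighborFinset u ↔ G.Adj u x :=
  SimpleGraph.mem_neighborFinset _ _ _

lemma degW_le {W : Finset (Fin 7)} {u : Fin 7} (hu : u ∈ W) :
    degW G W u ≤ W.card - 1 := by
  have h : W ∩ G.neighborFinset u ⊆ W.erase u := by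
    intro x hx
    obtain ⟨h1, h2⟩ := Finset.mem_inter.mp hx
    exact Finset.mem_erase.mpr ⟨fun h => G.irrefl (h ▸ mem_nbr.mp h2), h1⟩
  calc degW G W u ≤ (W.erase u).card := Finset.card_le_card h
    _ = W.card - 1 := Finset.card_erase_of_mem hu

lemma split_hub {W : Finset (Fin 7)} (hno : NoP4 G W) {u : Fin 7} (hu : u ∈ W)
    (hdeg : 3 ≤ degW G W u) :
    (pf G W).card ≤ degW G W u + (pf G (W \ insert u (G.neighborFinset u))).card := by
  classical
  set R := W \ insert u (G.neighborFinset u) with hR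
  have hsub : pf G W ⊆ ((pf G W).filter (fun p => p.1 = u ∨ p.2 = u)) ∪ pf G R := by
    intro p hp
    obtain ⟨h1, h2, hlt, hadj⟩ := mem_pf.mp hp
    rw [Finset.mem_union, Finset.mem_filter]
    by_cases hc : p.1 = u ∨ p.2 = u
    · exact Or.inl ⟨hp, hc⟩
    push_neg at hc
    obtain ⟨hc1, hc2⟩ := hc
    right
    -- claim p.1, p.2 ∉ N(u)
    have key : ∀ x y : Fin 7, x ∈ W → y ∈ W → G.Adj x y → x ≠ u → y ≠ u →
        x ∈ G.neighborFinset u → False := by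
      intro x y hxW hyW hxy hxu hyu hxN
      have hcard : (1 : ℕ) ≤ ((W ∩ G.neighborFinset u) \ {x, y}).card := by
        have h1 := Finset.le_card_sdiff ({x, y} : Finset (Fin 7)) (W ∩ G.neighborFinset u)
        have hxy2 : ({x, y} : Finset (Fin 7)).card ≤ 2 :=
          le_trans (Finset.card_insert_le _ _) (by simp)
        unfold degW at hdeg
        omega
      obtain ⟨w, hw⟩ := Finset.card_pos.mp (Nat.lt_of_lt_of_le Nat.zero_lt_one hcard)
      obtain ⟨hwWN, hwxy⟩ := Finset.mem_sdiff.mp hw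
      obtain ⟨hwW, hwN⟩ := Finset.mem_inter.mp hwWN
      simp only [Finset.mem_insert, Finset.mem_singleton, not_or] at hwxy
      obtain ⟨hwx, hwy⟩ := hwxy
      have hadjxu : G.Adj x u := (mem_nbr.mp hxN).symm
      have hadjuw : G.Adj u w := mem_nbr.mp hwN
      exact hno y x u w hyW hxW hu hwW (G.ne_of_adj hxy.symm) hyu
        (fun h => hwy h.symm) hxu (fun h => hwx h.symm) (G.ne_of_adj hadjuw)
        hxy.symm hadjxu hadjuw
    have hn1 : p.1 ∉ G.neighborFinset u := fun hN => key p.1 p.2 h1 h2 hadj hc1 hc2 hN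
    have hn2 : p.2 ∉ G.neighborFinset u := fun hN => key p.2 p.1 h2 h1 hadj.symm hc2 hc1 hN
    exact mem_pf.mpr ⟨Finset.mem_sdiff.mpr ⟨h1, by simp [hc1, hn1]⟩,
      Finset.mem_sdiff.mpr ⟨h2, by simp [hc2, hn2]⟩, hlt, hadj⟩
  have hfil : ((pf G W).filter (fun p => p.1 = u ∨ p.2 = u)).card ≤ degW G W u := by
    apply Finset.card_le_card_of_injOn (fun p => if p.1 = u then p.2 else p.1)
    · intro p hp
      rw [Finset.mem_coe, Finset.mem_filter] at hp
      obtain ⟨hpf, hpc⟩ := hp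
      obtain ⟨h1, h2, hlt, hadj⟩ := mem_pf.mp hpf
      rcases hpc with hc | hc
      · simp only [hc, if_pos rfl]
        exact Finset.mem_inter.mpr ⟨h2, mem_nbr.mpr (hc ▸ hadj)⟩
      · have hne : p.1 ≠ u := by
          intro h; rw [h, hc] at hlt; exact lt_irrefl _ hlt
        simp only [if_neg hne]
        exact Finset.mem_inter.mpr ⟨h1, mem_nbr.mpr ((hc ▸ hadj).symm)⟩
    · intro p hp q hq heq
      simp only [Finset.mem_coe, Finset.mem_filter] at hp hq
      obtain ⟨hpf, hpc⟩ := hp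
      obtain ⟨hqf, hqc⟩ := hq
      obtain ⟨_, _, hpl, _⟩ := mem_pf.mp hpf
      obtain ⟨_, _, hql, _⟩ := mem_pf.mp hqf
      simp only at heq
      rcases hpc with hp1 | hp2 <;> rcases hqc with hq1 | hq2
      · rw [if_pos hp1, if_pos hq1] at heq
        exact Prod.ext (hp1.trans hq1.symm) heq
      · have hqne : q.1 ≠ u := fun h => absurd (h ▸ hq2 ▸ hql) (lt_irrefl _)
        rw [if_pos hp1, if_neg hqne] at heq
        exfalso; omega
      · have hpne : p.1 ≠ u := fun h => absurd (h ▸ hp2 ▸ hpl) (lt_irrefl _)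
        rw [if_neg hpne, if_pos hq1] at heq
        exfalso; omega
      · have hpne : p.1 ≠ u := fun h => absurd (h ▸ hp2 ▸ hpl) (lt_irrefl _)
        have hqne : q.1 ≠ u := fun h => absurd (h ▸ hq2 ▸ hql) (lt_irrefl _)
        rw [if_neg hpne, if_neg hqne] at heq
        exact Prod.ext heq (hp2.trans hq2.symm)
  calc (pf G W).card ≤ _ := Finset.card_le_card hsub
    _ ≤ _ := Finset.card_union_le _ _
    _ ≤ degW G W u + (pf G R).card := by omega

end Pf2

section Pf3
variable {G : SimpleGraph (Fin 7)} [DecidableRel G.Adj]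

lemma pair_card_exact {W : Finset (Fin 7)} {u y z : Fin 7} (hdeg : degW G W u ≤ 2)
    (hy : y ∈ W ∩ G.neighborFinset u) (hz : z ∈ W ∩ G.neighborFinset u) (hyz : y ≠ z) :
    W ∩ G.neighborFinset u = {y, z} := by
  have hsub : ({y, z} : Finset (Fin 7)) ⊆ W ∩ G.neighborFinset u := by
    intro x hx
    rcases Finset.mem_insert.mp hx with rfl | hx
    · exact hy
    · rw [Finset.mem_singleton.mp hx]; exact hz
  have hc2 : ({y, z} : Finset (Fin 7)).card = 2 := by
    rw [Finset.card_insert_of_notMem (by simpa using hyz), Finset.card_singleton]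
  exact (Finset.eq_of_subset_of_card_le hsub (by unfold degW at hdeg; omega)).symm

lemma choose_two_zero {m : ℕ} (h : m ≤ 1) : m.choose 2 = 0 :=
  Nat.choose_eq_zero_of_lt (by omega)

lemma pf_empty : (pf G (∅ : Finset (Fin 7))).card = 0 := by
  simp [pf]

lemma deg2_bound {W : Finset (Fin 7)} (hno : NoP4 G W)
    (hdeg : ∀ u ∈ W, degW G W u ≤ 2) (h5 : W.card ≤ 5) :
    (pf G W).card ≤ max 3 (W.card - 1) := by
  classical
  by_cases htri : ∃ x y z : Fin 7, x ∈ W ∧ y ∈ W ∧ z ∈ W ∧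
      G.Adj x y ∧ G.Adj x z ∧ G.Adj y z
  · obtain ⟨x, y, z, hxW, hyW, hzW, hxy, hxz, hyz⟩ := htri
    have hnxy : x ≠ y := G.ne_of_adj hxy
    have hnxz : x ≠ z := G.ne_of_adj hxz
    have hnyz : y ≠ z := G.ne_of_adj hyz
    have hNx : W ∩ G.neighborFinset x = {y, z} :=
      pair_card_exact (hdeg x hxW)
        (Finset.mem_inter.mpr ⟨hyW, mem_nbr.mpr hxy⟩)
        (Finset.mem_inter.mpr ⟨hzW, mem_nbr.mpr hxz⟩) hnyz
    have hNy : W ∩ G.neighborFinset y = {x, z} :=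
      pair_card_exact (hdeg y hyW)
        (Finset.mem_inter.mpr ⟨hxW, mem_nbr.mpr hxy.symm⟩)
        (Finset.mem_inter.mpr ⟨hzW, mem_nbr.mpr hyz⟩) hnxz
    have hNz : W ∩ G.neighborFinset z = {x, y} :=
      pair_card_exact (hdeg z hzW)
        (Finset.mem_inter.mpr ⟨hxW, mem_nbr.mpr hxz.symm⟩)
        (Finset.mem_inter.mpr ⟨hyW, mem_nbr.mpr hyz.symm⟩) hnxy
    set R := W \ {x, y, z} with hRdef
    have hsub : pf G W ⊆ pf G {x, y, z} ∪ pf G R := by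
      intro p hp
      obtain ⟨h1, h2, hlt, hadj⟩ := mem_pf.mp hp
      rw [Finset.mem_union]
      have inc : ∀ a b : Fin 7, a ∈ W → b ∈ W → G.Adj a b →
          a ∈ ({x, y, z} : Finset (Fin 7)) → b ∈ ({x, y, z} : Finset (Fin 7)) := by
        intro a b haW hbW hab ha
        have hbmem : b ∈ W ∩ G.neighborFinset a :=
          Finset.mem_inter.mpr ⟨hbW, mem_nbr.mpr hab⟩
        simp only [Finset.mem_insert, Finset.mem_singleton] at ha ⊢
        rcases ha with rfl | rfl | rfl
        · rw [hNx] at hbmem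
          simp only [Finset.mem_insert, Finset.mem_singleton] at hbmem
          tauto
        · rw [hNy] at hbmem
          simp only [Finset.mem_insert, Finset.mem_singleton] at hbmem
          tauto
        · rw [hNz] at hbmem
          simp only [Finset.mem_insert, Finset.mem_singleton] at hbmem
          tauto
      by_cases hc : p.1 ∈ ({x, y, z} : Finset (Fin 7)) ∨ p.2 ∈ ({x, y, z} : Finset (Fin 7))
      · left
        rcases hc with hc | hc
        · exact mem_pf.mpr ⟨hc, inc _ _ h1 h2 hadj hc, hlt, hadj⟩
        · exact mem_pf.mpr ⟨inc _ _ h2 h1 hadj.symm hc, hc, hlt, hadj⟩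
      · push_neg at hc
        exact Or.inr (mem_pf.mpr ⟨Finset.mem_sdiff.mpr ⟨h1, hc.1⟩,
          Finset.mem_sdiff.mpr ⟨h2, hc.2⟩, hlt, hadj⟩)
    have hxyzW : ({x, y, z} : Finset (Fin 7)) ⊆ W := by
      intro w hw
      simp only [Finset.mem_insert, Finset.mem_singleton] at hw
      rcases hw with rfl | rfl | rfl <;> assumption
    have hxyzcard : ({x, y, z} : Finset (Fin 7)).card = 3 := by
      rw [Finset.card_insert_of_notMem (by simp [hnxy, hnxz]),
        Finset.card_insert_of_notMem (by simpa using hnyz), Finset.card_singleton]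
    have hWge3 : 3 ≤ W.card := hxyzcard ▸ Finset.card_le_card hxyzW
    have hRcard : R.card = W.card - 3 := by
      rw [hRdef, Finset.card_sdiff_of_subset hxyzW, hxyzcard]
    have hc1 : (pf G {x, y, z}).card ≤ 3 := by
      calc (pf G {x, y, z}).card ≤ ({x, y, z} : Finset (Fin 7)).card.choose 2 :=
            pf_card_le_choose _
        _ ≤ 3 := by rw [hxyzcard]; decide
    have hc2 : (pf G R).card ≤ R.card.choose 2 := pf_card_le_choose _
    have hcard_le := Finset.card_le_card hsub
    have hcu := Finset.card_union_le (pf G {x, y, z}) (pf G R)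
    by_cases hW5 : W.card = 5
    · have : (pf G R).card ≤ 1 := le_trans hc2 (choose_two_le_one (by omega))
      omega
    · have : (pf G R).card ≤ 0 := by
        have := choose_two_zero (m := R.card) (by omega)
        omega
      omega
  · rcases W.eq_empty_or_nonempty with rfl | ⟨x0, hx0⟩
    · rw [pf_empty]; omega
    · have hone : ∃ u ∈ W, degW G W u ≤ 1 := by
        by_contra hall
        push_neg at hall
        have hx2 : degW G W x0 = 2 := le_antisymm (hdeg _ hx0) (hall _ hx0)
        obtain ⟨y, z, hyz, hpair⟩ := Finset.card_eq_two.mp hx2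
        have hy : y ∈ W ∩ G.neighborFinset x0 := by rw [hpair]; simp
        have hz : z ∈ W ∩ G.neighborFinset x0 := by rw [hpair]; simp
        obtain ⟨hyW, hyN⟩ := Finset.mem_inter.mp hy
        obtain ⟨hzW, hzN⟩ := Finset.mem_inter.mp hz
        have hadjxy : G.Adj x0 y := mem_nbr.mp hyN
        have hadjxz : G.Adj x0 z := mem_nbr.mp hzN
        have hnadjyz : ¬ G.Adj y z := fun h =>
          htri ⟨x0, y, z, hx0, hyW, hzW, hadjxy, hadjxz, h⟩
        have hy2 : degW G W y = 2 := le_antisymm (hdeg _ hyW) (hall _ hyW)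
        obtain ⟨s, t', hst, hpair'⟩ := Finset.card_eq_two.mp hy2
        have hx0y : x0 ∈ W ∩ G.neighborFinset y :=
          Finset.mem_inter.mpr ⟨hx0, mem_nbr.mpr hadjxy.symm⟩
        rw [hpair'] at hx0y
        simp only [Finset.mem_insert, Finset.mem_singleton] at hx0y
        -- pick the other element t
        obtain ⟨t, htmem, htx0⟩ : ∃ t, t ∈ W ∩ G.neighborFinset y ∧ t ≠ x0 := by
          rcases hx0y with rfl | rfl
          · exact ⟨t', by rw [hpair']; simp, fun h => hst h.symm⟩
          · exact ⟨s, by rw [hpair']; simp, hst⟩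
        obtain ⟨htW, htN⟩ := Finset.mem_inter.mp htmem
        have hadjyt : G.Adj y t := mem_nbr.mp htN
        have htz : t ≠ z := fun h => hnadjyz (h ▸ hadjyt)
        exact hno z x0 y t hzW hx0 hyW htW (G.ne_of_adj hadjxz.symm) hyz.symm
          htz.symm (G.ne_of_adj hadjxy) htx0.symm (G.ne_of_adj hadjyt)
          hadjxz.symm hadjxy hadjyt
      obtain ⟨u0, hu0, hu0d⟩ := hone
      have hsum := pf_handshake (G := G) W
      have hsplit : ∑ u ∈ W.erase u0, degW G W u + degW G W u0 = ∑ u ∈ W, degW G W u :=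
        Finset.sum_erase_add _ _ hu0
      have hrest : ∑ u ∈ W.erase u0, degW G W u ≤ (W.erase u0).card * 2 := by
        apply Finset.sum_le_card_nsmul
        intro x hx
        exact hdeg x (Finset.mem_of_mem_erase hx)
      have hec : (W.erase u0).card = W.card - 1 := Finset.card_erase_of_mem hu0
      have hWpos : 1 ≤ W.card := Finset.card_pos.mpr ⟨x0, hx0⟩
      omega

lemma B6 {W : Finset (Fin 7)} (hno : NoP4 G W) (h : W.card ≤ 6) : (pf G W).card ≤ 6 := by
  classical
  by_cases hhub : ∃ u ∈ W, 3 ≤ degW G W u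
  · obtain ⟨u, hu, hku⟩ := hhub
    have hsplit := split_hub hno hu hku
    set R := W \ insert u (G.neighborFinset u) with hRdef
    have hkle : degW G W u ≤ W.card - 1 := degW_le hu
    have hRcard : R.card ≤ W.card - 1 - degW G W u := by
      have hsub : insert u (W ∩ G.neighborFinset u) ⊆ W ∩ insert u (G.neighborFinset u) := by
        intro w hw
        rcases Finset.mem_insert.mp hw with rfl | hw
        · exact Finset.mem_inter.mpr ⟨hu, Finset.mem_insert_self _ _⟩
        · obtain ⟨h1, h2⟩ := Finset.mem_inter.mp hw
          exact Finset.mem_inter.mpr ⟨h1, Finset.mem_insert_of_mem h2⟩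
      have hicard : (insert u (W ∩ G.neighborFinset u)).card = degW G W u + 1 := by
        rw [Finset.card_insert_of_notMem (fun h =>
          G.irrefl (mem_nbr.mp (Finset.mem_inter.mp h).2)), degW]
      have h1 : degW G W u + 1 ≤ (W ∩ insert u (G.neighborFinset u)).card := by
        rw [← hicard]; exact Finset.card_le_card hsub
      have h2 : R.card + (W ∩ insert u (G.neighborFinset u)).card = W.card := by
        rw [hRdef]
        exact Finset.card_sdiff_add_card_inter _ _
      omega
    have hpfR : (pf G R).card ≤ R.card.choose 2 := pf_card_le_choose _
    have : (pf G R).card ≤ 1 := le_trans hpfR (choose_two_le_one (by omega))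
    omega
  · push_neg at hhub
    have hsum := pf_handshake (G := G) W
    have hb : ∑ u ∈ W, degW G W u ≤ W.card * 2 := by
      apply Finset.sum_le_card_nsmul
      intro x hx
      have := hhub x hx
      omega
    omega

lemma B5 {W : Finset (Fin 7)} (hno : NoP4 G W) (h : W.card ≤ 5) : (pf G W).card ≤ 4 := by
  classical
  by_cases hhub : ∃ u ∈ W, 3 ≤ degW G W u
  · obtain ⟨u, hu, hku⟩ := hhub
    have hsplit := split_hub hno hu hku
    set R := W \ insert u (G.neighborFinset u) with hRdef
    have hkle : degW G W u ≤ W.card - 1 := degW_le hu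
    have hRcard : R.card ≤ W.card - 1 - degW G W u := by
      have hsub : insert u (W ∩ G.neighborFinset u) ⊆ W ∩ insert u (G.neighborFinset u) := by
        intro w hw
        rcases Finset.mem_insert.mp hw with rfl | hw
        · exact Finset.mem_inter.mpr ⟨hu, Finset.mem_insert_self _ _⟩
        · obtain ⟨h1, h2⟩ := Finset.mem_inter.mp hw
          exact Finset.mem_inter.mpr ⟨h1, Finset.mem_insert_of_mem h2⟩
      have hicard : (insert u (W ∩ G.neighborFinset u)).card = degW G W u + 1 := by
        rw [Finset.card_insert_of_notMem (fun h =>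
          G.irrefl (mem_nbr.mp (Finset.mem_inter.mp h).2)), degW]
      have h1 : degW G W u + 1 ≤ (W ∩ insert u (G.neighborFinset u)).card := by
        rw [← hicard]; exact Finset.card_le_card hsub
      have h2 : R.card + (W ∩ insert u (G.neighborFinset u)).card = W.card := by
        rw [hRdef]
        exact Finset.card_sdiff_add_card_inter _ _
      omega
    have hpfR : (pf G R).card ≤ R.card.choose 2 := pf_card_le_choose _
    have : (pf G R).card ≤ 0 := by
      have := choose_two_zero (m := R.card) (by omega)
      omega
    omega
  · push_neg at hhub
    have := deg2_bound hno (fun u hu => by have := hhub u hu; omega) h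
    omega

lemma B4 {W : Finset (Fin 7)} (hno : NoP4 G W) (h : W.card ≤ 4) : (pf G W).card ≤ 3 := by
  classical
  by_cases hhub : ∃ u ∈ W, 3 ≤ degW G W u
  · obtain ⟨u, hu, hku⟩ := hhub
    have hsplit := split_hub hno hu hku
    set R := W \ insert u (G.neighborFinset u) with hRdef
    have hkle : degW G W u ≤ W.card - 1 := degW_le hu
    have hRcard : R.card ≤ W.card - 1 - degW G W u := by
      have hsub : insert u (W ∩ G.neighborFinset u) ⊆ W ∩ insert u (G.neighborFinset u) := by
        intro w hw
        rcases Finset.mem_insert.mp hw with rfl | hw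
        · exact Finset.mem_inter.mpr ⟨hu, Finset.mem_insert_self _ _⟩
        · obtain ⟨h1, h2⟩ := Finset.mem_inter.mp hw
          exact Finset.mem_inter.mpr ⟨h1, Finset.mem_insert_of_mem h2⟩
      have hicard : (insert u (W ∩ G.neighborFinset u)).card = degW G W u + 1 := by
        rw [Finset.card_insert_of_notMem (fun h =>
          G.irrefl (mem_nbr.mp (Finset.mem_inter.mp h).2)), degW]
      have h1 : degW G W u + 1 ≤ (W ∩ insert u (G.neighborFinset u)).card := by
        rw [← hicard]; exact Finset.card_le_card hsub
      have h2 : R.card + (W ∩ insert u (G.neighborFinset u)).card = W.card := by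
        rw [hRdef]
        exact Finset.card_sdiff_add_card_inter _ _
      omega
    have hpfR : (pf G R).card ≤ R.card.choose 2 := pf_card_le_choose _
    have : (pf G R).card ≤ 0 := by
      have := choose_two_zero (m := R.card) (by omega)
      omega
    omega
  · push_neg at hhub
    have := deg2_bound hno (fun u hu => by have := hhub u hu; omega) (by omega)
    omega

end Pf3

section Count
variable (G : SimpleGraph (Fin 7)) [DecidableRel G.Adj]

def TT : Finset (Finset (Fin 7)) := G.cliqueFinset 3

def S (v : Fin 7) : ℕ := ((TT G).filter (fun s => v ∈ s)).card

lemma sum_S : ∑ v, S G v = 3 * (TT G).card := by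
  have h1 : ∀ v, S G v = ∑ s ∈ TT G, if v ∈ s then 1 else 0 := by
    intro v; rw [S, Finset.card_filter]
  simp only [h1]
  rw [Finset.sum_comm]
  have h2 : ∀ s ∈ TT G, (∑ v : Fin 7, if v ∈ s then 1 else 0) = 3 := by
    intro s hs
    have hc : s.card = 3 := (SimpleGraph.mem_cliqueFinset_iff.mp hs).card_eq
    rw [← hc]
    rw [Finset.sum_ite_mem, Finset.univ_inter, Finset.sum_const, smul_eq_mul, mul_one]
  rw [Finset.sum_congr rfl h2, Finset.sum_const, smul_eq_mul, mul_comm]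

lemma pair_min' {a b : Fin 7} (h : a < b) :
    ({a, b} : Finset (Fin 7)).min' ⟨a, by simp⟩ = a := by
  apply le_antisymm (Finset.min'_le _ _ (by simp))
  apply Finset.le_min'
  intro y hy
  rcases Finset.mem_insert.mp hy with rfl | hy
  · exact le_refl _
  · rw [Finset.mem_singleton.mp hy]; exact le_of_lt h

lemma pair_max' {a b : Fin 7} (h : a < b) :
    ({a, b} : Finset (Fin 7)).max' ⟨a, by simp⟩ = b := by
  apply le_antisymm
  · apply Finset.max'_le
    intro y hy
    rcases Finset.mem_insert.mp hy with rfl | hy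
    · exact le_of_lt h
    · rw [Finset.mem_singleton.mp hy]
  · exact Finset.le_max' _ _ (by simp)

lemma S_eq_pf (v : Fin 7) : S G v = (pf G (G.neighborFinset v)).card := by
  classical
  refine Finset.card_bij'
    (fun s hs => ((s.erase v).min' (Finset.card_pos.mp (by
      have hv : v ∈ s := (Finset.mem_filter.mp hs).2
      have hc : s.card = 3 := (SimpleGraph.mem_cliqueFinset_iff.mp (Finset.mem_filter.mp hs).1).card_eq
      rw [Finset.card_erase_of_mem hv, hc]; norm_num)),
      (s.erase v).max' (Finset.card_pos.mp (by
      have hv : v ∈ s := (Finset.mem_filter.mp hs).2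
      have hc : s.card = 3 := (SimpleGraph.mem_cliqueFinset_iff.mp (Finset.mem_filter.mp hs).1).card_eq
      rw [Finset.card_erase_of_mem hv, hc]; norm_num))))
    (fun p hp => insert v {p.1, p.2}) ?_ ?_ ?_ ?_
  · -- hi : image in pf
    intro s hs
    have hv : v ∈ s := (Finset.mem_filter.mp hs).2
    have hcl := (SimpleGraph.mem_cliqueFinset_iff.mp (Finset.mem_filter.mp hs).1)
    have hc : (s.erase v).card = 2 := by
      rw [Finset.card_erase_of_mem hv, hcl.card_eq]
    have hne : (s.erase v).Nonempty := Finset.card_pos.mp (by omega)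
    set a := (s.erase v).min' hne with ha
    set b := (s.erase v).max' hne with hb
    have hab : a < b := Finset.min'_lt_max'_of_card _ (by omega)
    have hams : a ∈ s.erase v := Finset.min'_mem _ _
    have hbms : b ∈ s.erase v := Finset.max'_mem _ _
    have hav : a ≠ v := Finset.ne_of_mem_erase hams
    have hbv : b ≠ v := Finset.ne_of_mem_erase hbms
    have has : a ∈ s := Finset.mem_of_mem_erase hams
    have hbs : b ∈ s := Finset.mem_of_mem_erase hbms
    simp only [pf, Finset.mem_filter, Finset.mem_product, SimpleGraph.mem_neighborFinset]
    exact ⟨⟨hcl.1 hv has hav.symm, hcl.1 hv hbs hbv.symm⟩, hab, hcl.1 has hbs (ne_of_lt hab)⟩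
  · -- hj : j maps into triangles containing v
    intro p hp
    simp only [pf, Finset.mem_filter, Finset.mem_product, SimpleGraph.mem_neighborFinset] at hp
    obtain ⟨⟨h1, h2⟩, hlt, hadj⟩ := hp
    refine Finset.mem_filter.mpr ⟨SimpleGraph.mem_cliqueFinset_iff.mpr ?_, by simp⟩
    exact SimpleGraph.is3Clique_triple_iff.mpr ⟨h1, h2, hadj⟩
  · -- left inverse
    intro s hs
    have hv : v ∈ s := (Finset.mem_filter.mp hs).2
    have hcl := (SimpleGraph.mem_cliqueFinset_iff.mp (Finset.mem_filter.mp hs).1)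
    have hc : (s.erase v).card = 2 := by
      rw [Finset.card_erase_of_mem hv, hcl.card_eq]
    have hne : (s.erase v).Nonempty := Finset.card_pos.mp (by omega)
    have hab : (s.erase v).min' hne ≠ (s.erase v).max' hne :=
      ne_of_lt (Finset.min'_lt_max'_of_card _ (by omega))
    have hsub : ({(s.erase v).min' hne, (s.erase v).max' hne} : Finset (Fin 7)) ⊆ s.erase v := by
      intro x hx
      rcases Finset.mem_insert.mp hx with rfl | hx
      · exact Finset.min'_mem _ _
      · rw [Finset.mem_singleton.mp hx]; exact Finset.max'_mem _ _
    have heq : ({(s.erase v).min' hne, (s.erase v).max' hne} : Finset (Fin 7)) = s.erase v := by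
      apply Finset.eq_of_subset_of_card_le hsub
      rw [hc, Finset.card_insert_of_notMem (by simpa using hab), Finset.card_singleton]
    show insert v {(s.erase v).min' hne, (s.erase v).max' hne} = s
    rw [heq, Finset.insert_erase hv]
  · -- right inverse
    intro p hp
    simp only [pf, Finset.mem_filter, Finset.mem_product, SimpleGraph.mem_neighborFinset] at hp
    obtain ⟨⟨h1, h2⟩, hlt, hadj⟩ := hp
    have hv1 : v ≠ p.1 := fun h => G.irrefl (h ▸ h1)
    have hv2 : v ≠ p.2 := fun h => G.irrefl (h ▸ h2)
    have her : (insert v ({p.1, p.2} : Finset (Fin 7))).erase v = {p.1, p.2} := by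
      rw [Finset.erase_insert]
      simp only [Finset.mem_insert, Finset.mem_singleton]
      rintro (h | h) <;> [exact hv1 h; exact hv2 h]
    show (((insert v ({p.1, p.2} : Finset (Fin 7))).erase v).min' _,
      ((insert v ({p.1, p.2} : Finset (Fin 7))).erase v).max' _) = p
    simp only [her]
    exact Prod.ext (pair_min' hlt) (pair_max' hlt)

end Count

section Main
variable {G : SimpleGraph (Fin 7)} [DecidableRel G.Adj]

lemma noP4_nbhd (hG : ¬Cfg G) (v : Fin 7) : NoP4 G (G.neighborFinset v) := by
  intro a b c d ha hb hc hd nab nac nad nbc nbd ncd hab hbc hcd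
  exact hG ⟨v, a, b, c, d, mem_nbr.mp ha, mem_nbr.mp hb, mem_nbr.mp hc, mem_nbr.mp hd,
    hab, hbc, hcd, nab, nac, nad, nbc, nbd, ncd⟩

lemma S_le_choose (v : Fin 7) : S G v ≤ (G.degree v).choose 2 := by
  rw [S_eq_pf]
  have h := pf_card_le_choose (G := G) (G.neighborFinset v)
  rwa [SimpleGraph.card_neighborFinset_eq_degree] at h

lemma S_le_4 (hG : ¬Cfg G) (v : Fin 7) (h : G.degree v ≤ 5) : S G v ≤ 4 := by
  rw [S_eq_pf]
  exact B5 (noP4_nbhd hG v) (by rwa [SimpleGraph.card_neighborFinset_eq_degree])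

lemma S_le_3 (hG : ¬Cfg G) (v : Fin 7) (h : G.degree v ≤ 4) : S G v ≤ 3 := by
  rw [S_eq_pf]
  exact B4 (noP4_nbhd hG v) (by rwa [SimpleGraph.card_neighborFinset_eq_degree])

lemma case_deg6 (hG : ¬Cfg G) {v : Fin 7} (hv : G.degree v = 6) :
    3 * (TT G).card ≤ 24 := by
  classical
  have hNv : G.neighborFinset v = Finset.univ.erase v := by
    apply Finset.eq_of_subset_of_card_le
    · intro x hx
      exact Finset.mem_erase.mpr ⟨fun h => G.irrefl (h ▸ mem_nbr.mp hx), Finset.mem_univ x⟩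
    · rw [Finset.card_erase_of_mem (Finset.mem_univ v),
        SimpleGraph.card_neighborFinset_eq_degree, hv]
      simp
  have hall : ∀ x, x ≠ v → G.Adj v x := fun x hx =>
    mem_nbr.mp (by rw [hNv]; exact Finset.mem_erase.mpr ⟨hx, Finset.mem_univ x⟩)
  have hSv : S G v ≤ 6 := by
    rw [S_eq_pf]
    exact B6 (noP4_nbhd hG v) (by rw [SimpleGraph.card_neighborFinset_eq_degree, hv])
  -- degree decomposition for u ≠ v
  have hdegsplit : ∀ u, u ≠ v → G.degree u = 1 + degW G (G.neighborFinset v) u := by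
    intro u hu
    have hNu : G.neighborFinset u = insert v (G.neighborFinset v ∩ G.neighborFinset u) := by
      ext x
      constructor
      · intro hx
        rcases eq_or_ne x v with rfl | hxv
        · exact Finset.mem_insert_self _ _
        · exact Finset.mem_insert_of_mem (Finset.mem_inter.mpr
            ⟨mem_nbr.mpr (hall x hxv), hx⟩)
      · intro hx
        rcases Finset.mem_insert.mp hx with rfl | hx
        · exact mem_nbr.mpr ((hall u hu).symm)
        · exact (Finset.mem_inter.mp hx).2
    have hvnot : v ∉ G.neighborFinset v ∩ G.neighborFinset u := by
      intro h
      exact G.irrefl (mem_nbr.mp (Finset.mem_inter.mp h).1)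
    rw [← SimpleGraph.card_neighborFinset_eq_degree, hNu,
      Finset.card_insert_of_notMem hvnot, degW]
    omega
  have hSu : ∀ u, u ≠ v → S G u ≤ G.degree u := by
    intro u hu
    by_cases h4 : 4 ≤ G.degree u
    · have hvW : v ∈ G.neighborFinset u := mem_nbr.mpr ((hall u hu).symm)
      have hdegWv : degW G (G.neighborFinset u) v = G.degree u - 1 := by
        have : G.neighborFinset u ∩ G.neighborFinset v = (G.neighborFinset u).erase v := by
          ext x
          constructor
          · intro hx
            obtain ⟨h1, h2⟩ := Finset.mem_inter.mp hx
            exact Finset.mem_erase.mpr ⟨fun h => G.irrefl (h ▸ mem_nbr.mp h2), h1⟩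
          · intro hx
            obtain ⟨h1, h2⟩ := Finset.mem_erase.mp hx
            exact Finset.mem_inter.mpr ⟨h2, mem_nbr.mpr (hall x h1)⟩
        rw [degW, this, Finset.card_erase_of_mem hvW,
          SimpleGraph.card_neighborFinset_eq_degree]
      have hsplit := split_hub (noP4_nbhd hG u) hvW (by omega)
      have hR : G.neighborFinset u \ insert v (G.neighborFinset v) = ∅ := by
        apply Finset.sdiff_eq_empty_iff_subset.mpr
        intro x hx
        rcases eq_or_ne x v with rfl | hxv
        · exact Finset.mem_insert_self _ _
        · exact Finset.mem_insert_of_mem (mem_nbr.mpr (hall x hxv))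
      rw [hR] at hsplit
      rw [S_eq_pf]
      have h0 := pf_empty (G := G)
      omega
    · have hch := S_le_choose (G := G) u
      have : (G.degree u).choose 2 ≤ G.degree u := by
        have hd3 : G.degree u ≤ 3 := by omega
        interval_cases h : G.degree u <;> simp_all
      omega
  have hsum : ∑ u ∈ Finset.univ.erase v, S G u + S G v = 3 * (TT G).card := by
    rw [Finset.sum_erase_add _ _ (Finset.mem_univ v), sum_S]
  have hbound : ∑ u ∈ Finset.univ.erase v, S G u ≤ 6 + 2 * S G v := by
    have h1 : ∑ u ∈ Finset.univ.erase v, S G u ≤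
        ∑ u ∈ Finset.univ.erase v, G.degree u := by
      apply Finset.sum_le_sum
      intro u hu
      exact hSu u (Finset.mem_erase.mp hu).1
    have h2 : ∑ u ∈ Finset.univ.erase v, G.degree u =
        ∑ u ∈ Finset.univ.erase v, (1 + degW G (G.neighborFinset v) u) := by
      apply Finset.sum_congr rfl
      intro u hu
      exact hdegsplit u (Finset.mem_erase.mp hu).1
    have h3 : ∑ u ∈ Finset.univ.erase v, (1 + degW G (G.neighborFinset v) u) =
        (Finset.univ.erase v).card + ∑ u ∈ Finset.univ.erase v, degW G (G.neighborFinset v) u := by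
      rw [Finset.sum_add_distrib, Finset.sum_const, smul_eq_mul, mul_one]
    have h4 : ∑ u ∈ Finset.univ.erase v, degW G (G.neighborFinset v) u =
        2 * (pf G (G.neighborFinset v)).card := by
      rw [← hNv]
      exact pf_handshake _
    have h5 : (Finset.univ.erase v).card = 6 := by
      rw [Finset.card_erase_of_mem (Finset.mem_univ v)]
      simp
    have h6 := S_eq_pf G v
    omega
  omega

end Main

section Endgame
variable {G : SimpleGraph (Fin 7)} [DecidableRel G.Adj]

lemma nonNbr_card (u : Fin 7) :
    (Finset.univ \ insert u (G.neighborFinset u)).card = 6 - G.degree u := by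
  have hsub : insert u (G.neighborFinset u) ⊆ Finset.univ := Finset.subset_univ _
  rw [Finset.card_sdiff_of_subset hsub, Finset.card_insert_of_notMem
    (fun h => G.irrefl (mem_nbr.mp h)), SimpleGraph.card_neighborFinset_eq_degree]
  simp

lemma mem_nonNbr {u x : Fin 7} :
    x ∈ Finset.univ \ insert u (G.neighborFinset u) ↔ x ≠ u ∧ ¬ G.Adj u x := by
  rw [Finset.mem_sdiff, Finset.mem_insert]
  simp [mem_nbr, not_or]

lemma adj_of_deg5 {u m : Fin 7} (h5 : G.degree u = 5) (hm : ¬ G.Adj u m) (hmu : m ≠ u)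
    {x : Fin 7} (hxu : x ≠ u) (hxm : x ≠ m) : G.Adj u x := by
  have hc : (Finset.univ \ insert u (G.neighborFinset u)).card = 1 := by
    rw [nonNbr_card, h5]
  obtain ⟨y, hy⟩ := Finset.card_eq_one.mp hc
  have hmmem : m ∈ Finset.univ \ insert u (G.neighborFinset u) :=
    mem_nonNbr.mpr ⟨hmu, hm⟩
  rw [hy, Finset.mem_singleton] at hmmem
  subst hmmem
  by_contra hadj
  have : x ∈ Finset.univ \ insert u (G.neighborFinset u) := mem_nonNbr.mpr ⟨hxu, hadj⟩
  rw [hy, Finset.mem_singleton] at this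
  exact hxm this

set_option maxHeartbeats 2000000 in
lemma upper (hG : ¬Cfg G) : (TT G).card ≤ 8 := by
  by_contra hlt
  push_neg at hlt
  have h9 : 9 ≤ (TT G).card := hlt
  by_cases hd6 : ∃ v, G.degree v = 6
  · obtain ⟨v, hv⟩ := hd6
    have := case_deg6 hG hv
    omega
  · push_neg at hd6
    have hdle : ∀ v, G.degree v ≤ 5 := by
      intro v
      have h7 : G.degree v < 7 := by
        have := SimpleGraph.degree_lt_card_verts (G := G) v
        simpa using this
      have := hd6 v
      omega
    have hS4 : ∀ v, S G v ≤ 4 := fun v => S_le_4 hG v (hdle v)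
    have hsumS := sum_S G
    have h28 : ∑ v, S G v ≤ 28 := by
      calc ∑ v, S G v ≤ ∑ _v : Fin 7, 4 := Finset.sum_le_sum (fun v _ => hS4 v)
        _ = 28 := by simp
    have h27 : ∑ v, S G v = 27 := by omega
    -- extract the exceptional vertex w
    have hex : ∃ w, S G w ≤ 3 := by
      by_contra hc
      push_neg at hc
      have : (28 : ℕ) ≤ ∑ v, S G v := by
        calc (28 : ℕ) = ∑ _v : Fin 7, 4 := by simp
          _ ≤ ∑ v, S G v := Finset.sum_le_sum (fun v _ => hc v)
      omega
    obtain ⟨w, hw3⟩ := hex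
    have hS4u : ∀ u, u ≠ w → S G u = 4 := by
      intro u hu
      by_contra hval
      have hu3 : S G u ≤ 3 := by have := hS4 u; omega
      have hsplit1 : ∑ x ∈ Finset.univ.erase w, S G x + S G w = ∑ v, S G v :=
        Finset.sum_erase_add _ _ (Finset.mem_univ w)
      have humem : u ∈ Finset.univ.erase w := Finset.mem_erase.mpr ⟨hu, Finset.mem_univ u⟩
      have hsplit2 : ∑ x ∈ (Finset.univ.erase w).erase u, S G x + S G u =
          ∑ x ∈ Finset.univ.erase w, S G x :=
        Finset.sum_erase_add _ _ humem
      have hrest : ∑ x ∈ (Finset.univ.erase w).erase u, S G x ≤ 20 := by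
        calc ∑ x ∈ (Finset.univ.erase w).erase u, S G x
            ≤ ∑ _x ∈ (Finset.univ.erase w).erase u, 4 :=
              Finset.sum_le_sum (fun x _ => hS4 x)
          _ = ((Finset.univ.erase w).erase u).card * 4 := by
              rw [Finset.sum_const, smul_eq_mul]
          _ ≤ 20 := by
              have : ((Finset.univ.erase w).erase u).card ≤ 5 := by
                rw [Finset.card_erase_of_mem humem,
                  Finset.card_erase_of_mem (Finset.mem_univ w)]
                simp
              omega
      omega
    have hSw : S G w = 3 := by
      have hsplit1 : ∑ x ∈ Finset.univ.erase w, S G x + S G w = ∑ v, S G v :=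
        Finset.sum_erase_add _ _ (Finset.mem_univ w)
      have h24 : ∑ x ∈ Finset.univ.erase w, S G x = 24 := by
        have : ∑ x ∈ Finset.univ.erase w, S G x = ∑ _x ∈ Finset.univ.erase w, 4 :=
          Finset.sum_congr rfl (fun x hx => hS4u x (Finset.mem_erase.mp hx).1)
        rw [this, Finset.sum_const, smul_eq_mul,
          Finset.card_erase_of_mem (Finset.mem_univ w)]
        simp
      omega
    -- degrees
    have hdeg5 : ∀ u, u ≠ w → G.degree u = 5 := by
      intro u hu
      by_contra hd
      have h4 : G.degree u ≤ 4 := by have := hdle u; omega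
      have := S_le_3 hG u h4
      have := hS4u u hu
      omega
    have hdegw3 : 3 ≤ G.degree w := by
      by_contra hd
      push_neg at hd
      have hch := S_le_choose (G := G) w
      have : (G.degree w).choose 2 ≤ 1 := choose_two_le_one (by omega)
      omega
    have hdegw4 : G.degree w = 4 := by
      have hpar := SimpleGraph.sum_degrees_eq_twice_card_edges G
      have hsplitd : ∑ x ∈ Finset.univ.erase w, G.degree x + G.degree w =
          ∑ v, G.degree v := Finset.sum_erase_add _ _ (Finset.mem_univ w)
      have h30 : ∑ x ∈ Finset.univ.erase w, G.degree x = 30 := by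
        have : ∑ x ∈ Finset.univ.erase w, G.degree x = ∑ _x ∈ Finset.univ.erase w, 5 :=
          Finset.sum_congr rfl (fun x hx => hdeg5 x (Finset.mem_erase.mp hx).1)
        rw [this, Finset.sum_const, smul_eq_mul,
          Finset.card_erase_of_mem (Finset.mem_univ w)]
        simp
      have := hdle w
      omega
    -- non-neighbours of w
    have hcw : (Finset.univ \ insert w (G.neighborFinset w)).card = 2 := by
      rw [nonNbr_card, hdegw4]
    obtain ⟨a, b, hab, habeq⟩ := Finset.card_eq_two.mp hcw
    have haw : a ≠ w ∧ ¬ G.Adj w a := mem_nonNbr.mp (by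
      rw [habeq]; exact Finset.mem_insert_self _ _)
    have hbw : b ≠ w ∧ ¬ G.Adj w b := mem_nonNbr.mp (by
      rw [habeq]; exact Finset.mem_insert_of_mem (Finset.mem_singleton_self _))
    have hwadj : ∀ x, x ≠ w → x ≠ a → x ≠ b → G.Adj w x := by
      intro x hxw hxa hxb
      by_contra hadj
      have : x ∈ Finset.univ \ insert w (G.neighborFinset w) := mem_nonNbr.mpr ⟨hxw, hadj⟩
      rw [habeq] at this
      simp only [Finset.mem_insert, Finset.mem_singleton] at this
      rcases this with h | h
      · exact hxa h
      · exact hxb h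
    -- the set C
    have hCcard : (Finset.univ \ ({w, a, b} : Finset (Fin 7))).card = 4 := by
      rw [Finset.card_sdiff_of_subset (Finset.subset_univ _)]
      have : ({w, a, b} : Finset (Fin 7)).card = 3 := by
        rw [Finset.card_insert_of_notMem (by simp [Ne.symm haw.1, Ne.symm hbw.1]),
          Finset.card_insert_of_notMem (by simpa using hab), Finset.card_singleton]
      rw [this]
      simp
    obtain ⟨c, hcC⟩ : (Finset.univ \ ({w, a, b} : Finset (Fin 7))).Nonempty :=
      Finset.card_pos.mp (by omega)
    have hcprops : c ≠ w ∧ c ≠ a ∧ c ≠ b := by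
      have := Finset.mem_sdiff.mp hcC
      simp only [Finset.mem_insert, Finset.mem_singleton, not_or] at this
      exact this.2
    obtain ⟨hcw', hca, hcb⟩ := hcprops
    -- unique non-neighbour of c
    have hcc : (Finset.univ \ insert c (G.neighborFinset c)).card = 1 := by
      rw [nonNbr_card, hdeg5 c hcw']
    obtain ⟨d, hd⟩ := Finset.card_eq_one.mp hcc
    have hdprops : d ≠ c ∧ ¬ G.Adj c d := mem_nonNbr.mp (by rw [hd]; simp)
    have hcadj : ∀ x, x ≠ c → x ≠ d → G.Adj c x :=
      fun x hxc hxd => adj_of_deg5 (hdeg5 c hcw') hdprops.2 hdprops.1 hxc hxd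
    -- a and b are adjacent to everything except w
    have hnadjaw : ¬ G.Adj a w := fun h => haw.2 h.symm
    have hnadjbw : ¬ G.Adj b w := fun h => hbw.2 h.symm
    have haadj : ∀ x, x ≠ a → x ≠ w → G.Adj a x :=
      fun x hxa hxw => adj_of_deg5 (hdeg5 a haw.1) hnadjaw (Ne.symm haw.1) hxa hxw
    have hbadj : ∀ x, x ≠ b → x ≠ w → G.Adj b x :=
      fun x hxb hxw => adj_of_deg5 (hdeg5 b hbw.1) hnadjbw (Ne.symm hbw.1) hxb hxw
    -- find e distinct from w,a,b,c,d
    have hEcard : 2 ≤ ((Finset.univ \ ({w, a, b} : Finset (Fin 7))) \ ({c, d} : Finset (Fin 7))).card := by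
      have h1 := Finset.le_card_sdiff ({c, d} : Finset (Fin 7))
        (Finset.univ \ ({w, a, b} : Finset (Fin 7)))
      have h2 : ({c, d} : Finset (Fin 7)).card ≤ 2 :=
        le_trans (Finset.card_insert_le _ _) (by simp)
      omega
    obtain ⟨e, he⟩ : ((Finset.univ \ ({w, a, b} : Finset (Fin 7))) \ ({c, d} : Finset (Fin 7))).Nonempty :=
      Finset.card_pos.mp (by omega)
    have heprops : e ≠ w ∧ e ≠ a ∧ e ≠ b ∧ e ≠ c ∧ e ≠ d := by
      have h1 := Finset.mem_sdiff.mp he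
      have h2 := Finset.mem_sdiff.mp h1.1
      simp only [Finset.mem_insert, Finset.mem_singleton, not_or] at h1 h2
      exact ⟨h2.2.1, h2.2.2.1, h2.2.2.2, h1.2.1, h1.2.2⟩
    obtain ⟨hew, hea, heb, hec, hed⟩ := heprops
    -- build the configuration: apex c, path w - e - a - b
    apply hG
    exact ⟨c, w, e, a, b,
      (hwadj c hcw' hca hcb).symm,
      hcadj e hec hed,
      (haadj c hca hcw').symm,
      (hbadj c hcb hcw').symm,
      hwadj e hew hea heb,
      (haadj e hea hew).symm,
      haadj b (Ne.symm hab) hbw.1,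
      Ne.symm hew, Ne.symm haw.1, Ne.symm hbw.1, hea, heb, hab⟩

end Endgame
-- ### lower bound construction: two K4's sharing vertex 0
def b0 (i j : Fin 7) : Bool :=
  decide (i ≠ j) && ((decide (i.val < 4) && decide (j.val < 4)) ||
    (decide (i.val = 0 ∨ 4 ≤ i.val) && decide (j.val = 0 ∨ 4 ≤ j.val)))

def G0 : SimpleGraph (Fin 7) where
  Adj i j := b0 i j = true
  symm := by
    have h : ∀ a b : Fin 7, b0 a b = true → b0 b a = true := by decide
    exact ⟨fun a b hab => h a b hab⟩
  loopless := by
    have h : ∀ a : Fin 7, ¬ (b0 a a = true) := by decide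
    exact ⟨fun a => h a⟩

instance : DecidableRel G0.Adj := fun a b => instDecidableEqBool _ _

instance : Decidable (Cfg G0) := by unfold Cfg; infer_instance

lemma G0_noCfg : ¬ Cfg G0 := by decide

lemma G0_count : (TT G0).card = 8 := by
  rfl

theorem tc_eq (G : SimpleGraph (Fin 7)) [DecidableRel G.Adj] :
    triangleCount G = (TT G).card := by
  rw [triangleCount, TT, ← SimpleGraph.coe_cliqueFinset, Set.ncard_coe_finset]


/-- `ex(7, K₃, P̂₄) = 8`. -/
theorem stmt_4 :
    IsGreatest {t : ℕ | ∃ G : SimpleGraph (Fin 7),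
      ¬ Contains hatP4 G ∧ triangleCount G = t} 8 := by
  constructor
  · exact ⟨G0, fun h => G0_noCfg ((contains_iff_cfg G0).mp h), by rw [tc_eq, G0_count]⟩
  · rintro t ⟨G, hnc, rfl⟩
    letI : DecidableRel G.Adj := Classical.decRel _
    rw [tc_eq]
    exact upper (fun h => hnc ((contains_iff_cfg G).mpr h))
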